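/- Let ℐ_pol^q be the ideal of the polynomial algebra ℝ[(s^I)_{I ∈ 𝕀₀^q, I ≠ ∅}] generated by the elements s^{I₁}⋯s^{I_n} − Σ_{I ∈ 𝕀₀^q} ε^{I₁⋯I_n}_I s^I for n ≥ 2 and I₁,…,I_n ∈ 𝕀₂^q. Then the quotient ℝ[(s^I)]/ℐ_pol^q is isomorphic as an ℝ-algebra to the even Grassmann algebra ℝ[η¹,…,η^q]₀, via the map sending s^I to η^I. -/

import Mathlib

set_option maxHeartbeats 1000000
set_option synthInstance.maxHeartbeats 100000


/-- Sign `ε^{IJ}` : for disjoint increasing multi-indices `I`, `J`,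
the signature of the shuffle reordering the concatenation `IJ`; `0` if not
disjoint. -/
def gSign {q : ℕ} (I J : Finset (Fin q)) : ℤ :=
  if Disjoint I J then
    (-1 : ℤ) ^ (((I ×ˢ J).filter (fun p => p.2 < p.1)).card)
  else 0

/-- The product of the pairwise shuffle signs of a list of multi-indices. -/
def gSignAux {q : ℕ} : List (Finset (Fin q)) → ℤ
  | [] => 1
  | J :: L => gSign J (L.foldr (· ∪ ·) ∅) * gSignAux L

/-- `ε^{I₁⋯I_n}_I`: the signature of the permutation sorting the
concatenation `I₁⋯I_n` into `I` when the `I_j` are pairwise disjoint with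
union `I`, and `0` otherwise. -/
def epsList {q : ℕ} (L : List (Finset (Fin q))) (I : Finset (Fin q)) : ℤ :=
  if (L.foldr (· ∪ ·) ∅ = I ∧ L.Pairwise Disjoint) then gSignAux L else 0

/-- The Grassmann monomial `η^I`. -/
noncomputable def etaI {q : ℕ} (I : Finset (Fin q)) :
    ExteriorAlgebra ℝ (Fin q → ℝ) :=
  ((I.sort (· ≤ ·)).map (fun i => ExteriorAlgebra.ι ℝ (Pi.single i 1))).prod

namespace GrassAux

variable {q : ℕ}



abbrev V (q : ℕ) := Finset (Fin q) →₀ ℝ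

noncomputable def bV (I : Finset (Fin q)) : V q := Finsupp.single I 1

def sgnR (i : Fin q) (K : Finset (Fin q)) : ℝ := (-1) ^ (K.filter (· < i)).card

noncomputable def aOp (i : Fin q) : V q →ₗ[ℝ] V q :=
  Finsupp.lsum ℝ fun K => if i ∈ K then 0 else sgnR i K • Finsupp.lsingle (insert i K)

lemma aOp_single (i : Fin q) (K : Finset (Fin q)) (x : ℝ) :
    aOp i (Finsupp.single K x) =
      if i ∈ K then 0 else sgnR i K • Finsupp.single (insert i K) x := by
  rw [aOp, Finsupp.lsum_single]
  split <;> simp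

lemma filter_insert_card (i j : Fin q) (K : Finset (Fin q)) (hj : j ∉ K) :
    ((insert j K).filter (· < i)).card =
      (K.filter (· < i)).card + (if j < i then 1 else 0) := by
  rw [Finset.filter_insert]
  split
  · rw [Finset.card_insert_of_notMem (fun hc => hj (Finset.mem_of_mem_filter _ hc))]
  · rw [add_zero]

lemma sgnR_insert (i j : Fin q) (K : Finset (Fin q)) (hj : j ∉ K) :
    sgnR i (insert j K) = (if j < i then (-1 : ℝ) else 1) * sgnR i K := by
  rw [sgnR, sgnR, filter_insert_card i j K hj]
  split <;> simp [pow_succ, pow_add, mul_comm]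

lemma aOp_comp_single (i j : Fin q) (K : Finset (Fin q)) (x : ℝ) :
    aOp i (aOp j (Finsupp.single K x)) =
      if j ∈ K then 0 else if i ∈ insert j K then 0
        else (sgnR j K * sgnR i (insert j K)) • Finsupp.single (insert i (insert j K)) x := by
  rw [aOp_single]; split
  · simp
  · rw [map_smul, aOp_single]; split
    · simp
    · rw [smul_smul]

lemma aOp_anticomm (i j : Fin q) : aOp (q := q) i ∘ₗ aOp j + aOp j ∘ₗ aOp i = 0 := by
  apply Finsupp.lhom_ext
  intro K x
  simp only [LinearMap.add_apply, LinearMap.comp_apply, LinearMap.zero_apply,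
    aOp_comp_single]
  by_cases hjK : j ∈ K <;> by_cases hiK : i ∈ K
  · rw [if_pos hjK, if_pos hiK]; simp
  · rw [if_pos hjK, if_neg hiK, if_pos (Finset.mem_insert_of_mem hjK)]; simp
  · rw [if_neg hjK, if_pos hiK, if_pos (Finset.mem_insert_of_mem hiK)]; simp
  · by_cases hij : i = j
    · subst hij
      simp [hjK]
    · rw [if_neg hjK, if_neg hiK,
        if_neg (by simp [hij, hiK]), if_neg (by simp [Ne.symm hij, hjK])]
      rw [Finset.insert_comm, sgnR_insert i j K hjK, sgnR_insert j i K hiK, ← add_smul]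
      rcases lt_or_gt_of_ne hij with h | h
      · rw [if_neg (not_lt.2 h.le), if_pos h]
        ring_nf
        simp
      · rw [if_pos h, if_neg (not_lt.2 h.le)]
        ring_nf
        simp

lemma aOp_mul_anticomm (i j : Fin q) :
    (aOp j * aOp i : Module.End ℝ (V q)) = -(aOp i * aOp j) := by
  have h : (aOp i * aOp j : Module.End ℝ (V q)) + aOp j * aOp i = 0 := aOp_anticomm i j
  exact eq_neg_of_add_eq_zero_right (a := (aOp i * aOp j : Module.End ℝ (V q))) h

noncomputable def ιEnd (q : ℕ) : (Fin q → ℝ) →ₗ[ℝ] Module.End ℝ (V q) where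
  toFun m := ∑ i, m i • aOp i
  map_add' x y := by simp [add_smul, Finset.sum_add_distrib]
  map_smul' c x := by simp [smul_smul, Finset.smul_sum]

lemma ιEnd_sq (m : Fin q → ℝ) : ιEnd q m * ιEnd q m = 0 := by
  have key : ∀ i j : Fin q,
      (m j * m i) • (aOp j * aOp i : Module.End ℝ (V q)) +
        (m i * m j) • (aOp i * aOp j : Module.End ℝ (V q)) = 0 := by
    intro i j
    rw [aOp_mul_anticomm, mul_comm (m j) (m i)]
    module
  have hS : (ιEnd q m * ιEnd q m : Module.End ℝ (V q)) =
      ∑ i, ∑ j, (m i * m j) • (aOp i * aOp j : Module.End ℝ (V q)) := by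
    show (∑ i, m i • aOp i : Module.End ℝ (V q)) * (∑ j, m j • aOp j) = _
    rw [Finset.sum_mul_sum]
    exact Finset.sum_congr rfl fun i _ => Finset.sum_congr rfl fun j _ =>
      smul_mul_smul_comm _ _ _ _
  set S := ∑ i, ∑ j, (m i * m j) • (aOp i * aOp j : Module.End ℝ (V q)) with hSdef
  have h2 : S + S = 0 := by
    nth_rewrite 1 [hSdef]
    rw [Finset.sum_comm, hSdef, ← Finset.sum_add_distrib]
    rw [show (0 : Module.End ℝ (V q)) = ∑ i : Fin q, 0 by simp]
    refine Finset.sum_congr rfl fun i _ => ?_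
    rw [← Finset.sum_add_distrib]
    rw [show (0 : Module.End ℝ (V q)) = ∑ j : Fin q, 0 by simp]
    exact Finset.sum_congr rfl fun j _ => key i j
  have h3 : (2 : ℝ) • S = 0 := by rw [two_smul]; exact h2
  rcases smul_eq_zero.mp h3 with h | h
  · norm_num at h
  · rw [hS]; exact h






noncomputable def ιe (i : Fin q) : ExteriorAlgebra ℝ (Fin q → ℝ) :=
  ExteriorAlgebra.ι ℝ (Pi.single i 1)

lemma etaI_def (I : Finset (Fin q)) : etaI I = ((I.sort (· ≤ ·)).map ιe).prod := rfl

lemma ext_anticomm (x y : Fin q → ℝ) :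
    ExteriorAlgebra.ι ℝ x * ExteriorAlgebra.ι ℝ y = -(ExteriorAlgebra.ι ℝ y * ExteriorAlgebra.ι ℝ x) := by
  have h := ExteriorAlgebra.ι_sq_zero (R := ℝ) (x + y)
  rw [map_add, add_mul, mul_add, mul_add, ExteriorAlgebra.ι_sq_zero,
    ExteriorAlgebra.ι_sq_zero, zero_add, add_zero] at h
  exact eq_neg_of_add_eq_zero_left h

lemma mul_prod_zero_of_mem (v : Fin q → ℝ) :
    ∀ (l : List (Fin q → ℝ)), v ∈ l →
      ExteriorAlgebra.ι ℝ v * (l.map (ExteriorAlgebra.ι ℝ)).prod = 0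
  | [], h => absurd h (List.not_mem_nil (a := v))
  | w :: t, h => by
    rw [List.map_cons, List.prod_cons]
    rcases List.mem_cons.mp h with rfl | hv
    · rw [← mul_assoc, ExteriorAlgebra.ι_sq_zero, zero_mul]
    · rw [← mul_assoc, ext_anticomm, neg_mul, mul_assoc,
        mul_prod_zero_of_mem v t hv, mul_zero, neg_zero]

lemma prod_zero_of_not_nodup :
    ∀ (l : List (Fin q → ℝ)), ¬ l.Nodup → (l.map (ExteriorAlgebra.ι ℝ)).prod = 0
  | [], h => absurd List.nodup_nil h
  | w :: t, h => by
    rw [List.map_cons, List.prod_cons]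
    rw [List.nodup_cons] at h
    push_neg at h
    by_cases hw : w ∈ t
    · exact mul_prod_zero_of_mem w t hw
    · rw [prod_zero_of_not_nodup t (h hw), mul_zero]

lemma ιe_swap (a x : Fin q) (P : ExteriorAlgebra ℝ (Fin q → ℝ)) :
    ιe a * (ιe x * P) = -(ιe x * (ιe a * P)) := by
  rw [← mul_assoc, ιe, ιe, ext_anticomm, neg_mul, mul_assoc]

/-- Key reordering lemma on sorted lists. -/
lemma iota_mul_sorted_prod :
    ∀ (l : List (Fin q)), l.Pairwise (· < ·) → ∀ a : Fin q,
      ιe a * (l.map ιe).prod =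
        if a ∈ l then 0
        else ((-1 : ℝ) ^ (l.filter (· < a)).length) •
          ((l.orderedInsert (· ≤ ·) a).map ιe).prod
  | [], _, a => by simp
  | x :: t, hs, a => by
    have ht : t.Pairwise (· < ·) := hs.of_cons
    have hxt : ∀ y ∈ t, x < y := fun y hy => List.rel_of_pairwise_cons hs hy
    rcases lt_trichotomy a x with hax | hax | hax
    · have hmem : a ∉ x :: t := by
        intro hc
        rcases List.mem_cons.mp hc with rfl | hc
        · exact lt_irrefl a hax
        · exact absurd (hax.trans (hxt a hc)) (lt_irrefl a)
      rw [if_neg hmem]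
      have hfil : (x :: t).filter (· < a) = [] := by
        rw [List.filter_eq_nil_iff]
        intro y hy
        simp only [decide_eq_true_eq]
        rcases List.mem_cons.mp hy with rfl | hy
        · exact not_lt.2 hax.le
        · exact not_lt.2 (hax.trans (hxt y hy)).le
      rw [hfil]
      rw [List.orderedInsert, if_pos hax.le]
      simp
    · subst hax
      rw [if_pos (List.mem_cons_self (a := a) (l := t)), List.map_cons, List.prod_cons, ← mul_assoc,
        ιe, ExteriorAlgebra.ι_sq_zero, zero_mul]
    · by_cases hat : a ∈ t
      · rw [if_pos (List.mem_cons.mpr (Or.inr hat)), List.map_cons, List.prod_cons, ιe_swap,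
          iota_mul_sorted_prod t ht a, if_pos hat, mul_zero, neg_zero]
      · have hmem : a ∉ x :: t := by
          intro hc
          rcases List.mem_cons.mp hc with rfl | hc
          · exact lt_irrefl a hax
          · exact hat hc
        rw [if_neg hmem, List.map_cons, List.prod_cons, ιe_swap,
          iota_mul_sorted_prod t ht a, if_neg hat]
        have hfil : ((x :: t).filter (· < a)).length = (t.filter (· < a)).length + 1 := by
          rw [List.filter_cons, if_pos (by simpa using hax)]
          simp
        have hins : (x :: t).orderedInsert (· ≤ ·) a = x :: t.orderedInsert (· ≤ ·) a := by
          rw [List.orderedInsert, if_neg (not_le.2 hax)]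
        rw [hfil, hins, List.map_cons, List.prod_cons, pow_succ]
        rw [mul_smul_comm, mul_neg_one, neg_smul]

lemma sort_insert (a : Fin q) (S : Finset (Fin q)) (ha : a ∉ S) :
    (insert a S).sort (· ≤ ·) = (S.sort (· ≤ ·)).orderedInsert (· ≤ ·) a := by
  refine List.Perm.eq_of_pairwise' (Finset.pairwise_sort _ _)
    (List.Pairwise.orderedInsert a _ (Finset.pairwise_sort _ _)) ?_
  exact ((Finset.sort_perm_toList _ _).trans (Finset.toList_insert ha)).trans
    ((((Finset.sort_perm_toList _ _).symm).cons a).trans (List.perm_orderedInsert _ _ _).symm)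

lemma length_filter_sort (S : Finset (Fin q)) (a : Fin q) :
    ((S.sort (· ≤ ·)).filter (· < a)).length = (S.filter (· < a)).card := by
  conv_rhs => rw [← Finset.sort_toFinset S (· ≤ ·)]
  rw [← List.toFinset_card_of_nodup ((Finset.sort_nodup S (· ≤ ·)).filter (fun x => decide (x < a)))]
  congr 1
  rw [List.toFinset_filter]
  apply Finset.filter_congr
  intro x _
  simp

lemma etaI_insert (a : Fin q) (S : Finset (Fin q)) (ha : a ∉ S) :
    ιe a * etaI S = ((-1 : ℝ) ^ (S.filter (· < a)).card) • etaI (insert a S) := by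
  rw [etaI_def, etaI_def, sort_insert a S ha,
    iota_mul_sorted_prod _ (Finset.sortedLT_sort S).pairwise a,
    if_neg (fun hc => ha ((Finset.mem_sort _).mp hc)), length_filter_sort]

lemma etaI_kill (a : Fin q) (S : Finset (Fin q)) (ha : a ∈ S) :
    ιe a * etaI S = 0 := by
  rw [etaI_def, ιe]
  have : ((S.sort (· ≤ ·)).map ιe).prod =
      (((S.sort (· ≤ ·)).map (fun i => (Pi.single i 1 : Fin q → ℝ))).map
        (ExteriorAlgebra.ι ℝ)).prod := by
    rw [List.map_map]; rfl
  rw [this]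
  exact mul_prod_zero_of_mem _ _ (List.mem_map_of_mem ((Finset.mem_sort _).mpr ha))

noncomputable def Phi (q : ℕ) : ExteriorAlgebra ℝ (Fin q → ℝ) →ₐ[ℝ] Module.End ℝ (V q) :=
  ExteriorAlgebra.lift ℝ ⟨ιEnd q, ιEnd_sq⟩

lemma vec_expand (m : Fin q → ℝ) : m = ∑ i, m i • (Pi.single i 1 : Fin q → ℝ) := by
  funext j
  rw [Finset.sum_apply]
  rw [Finset.sum_eq_single j]
  · simp
  · intro i _ hij
    simp [Pi.single_apply, Ne.symm hij]
  · simp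

lemma Phi_ιe (i : Fin q) : Phi q (ιe i) = aOp i := by
  rw [Phi, ιe, ExteriorAlgebra.lift_ι_apply]
  show ∑ k, (Pi.single i 1 : Fin q → ℝ) k • aOp k = aOp i
  rw [Finset.sum_eq_single i]
  · simp
  · intro k _ hk
    simp [Pi.single_apply, Ne.symm hk]
  · simp

lemma Phi_etaI (I : Finset (Fin q)) :
    Phi q (etaI I) = ((I.sort (· ≤ ·)).map aOp).prod := by
  rw [etaI_def, map_list_prod, List.map_map]
  congr 1
  apply List.map_congr_left
  intro i _
  exact Phi_ιe i

lemma gSign_empty_left (K : Finset (Fin q)) : gSign ∅ K = 1 := by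
  rw [gSign, if_pos (Finset.disjoint_empty_left K)]
  simp

lemma gSign_empty_right (I : Finset (Fin q)) : gSign I ∅ = 1 := by
  rw [gSign, if_pos (Finset.disjoint_empty_right I)]
  simp

lemma gSign_insert_left (i : Fin q) (T K : Finset (Fin q)) (hiT : i ∉ T) (hiK : i ∉ K) :
    ((gSign (insert i T) K : ℤ) : ℝ) = sgnR i K * ((gSign T K : ℤ) : ℝ) := by
  by_cases hd : Disjoint T K
  · have hd' : Disjoint (insert i T) K := by
      rw [Finset.insert_eq, Finset.disjoint_union_left]
      exact ⟨Finset.disjoint_singleton_left.mpr hiK, hd⟩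
    rw [gSign, gSign, if_pos hd, if_pos hd']
    have hsplit : (insert i T) ×ˢ K = ({i} ×ˢ K) ∪ T ×ˢ K := by
      rw [Finset.insert_eq, Finset.union_product]
    rw [hsplit, Finset.filter_union, Finset.card_union_of_disjoint]
    · have h1 : (({i} ×ˢ K).filter (fun p => p.2 < p.1)).card = (K.filter (· < i)).card := by
        rw [Finset.singleton_product, Finset.filter_map, Finset.card_map]
        rfl
      rw [h1, pow_add]
      push_cast
      rfl
    · refine Finset.disjoint_filter_filter ?_
      rw [Finset.disjoint_left]
      rintro ⟨p1, p2⟩ hp hq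
      rw [Finset.mem_product] at hp hq
      apply hiT
      have hp1 : p1 = i := Finset.mem_singleton.mp hp.1
      exact hp1 ▸ hq.1
  · have hd' : ¬ Disjoint (insert i T) K := fun hc =>
      hd (hc.mono_left (Finset.subset_insert i T))
    rw [gSign, gSign, if_neg hd, if_neg hd']
    simp

/-- MAIN A: action of a sorted product of creation operators on a basis vector. -/
lemma aProd_single :
    ∀ (l : List (Fin q)), l.Pairwise (· < ·) → ∀ K : Finset (Fin q),
      ((l.map aOp).prod) (bV K) = ((gSign l.toFinset K : ℤ) : ℝ) • bV (l.toFinset ∪ K)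
  | [], _, K => by
    simp [gSign_empty_left, bV]
  | i :: t, hs, K => by
    have ht : t.Pairwise (· < ·) := hs.of_cons
    have hxt : ∀ y ∈ t, i < y := fun y hy => List.rel_of_pairwise_cons hs hy
    have hiT : i ∉ t.toFinset := by
      intro hc
      exact lt_irrefl i (hxt i (List.mem_toFinset.mp hc))
    rw [List.map_cons, List.prod_cons, Module.End.mul_apply,
      aProd_single t ht K, map_smul]
    rw [show ((i :: t).toFinset : Finset (Fin q)) = insert i t.toFinset from List.toFinset_cons]
    by_cases hiK : i ∈ K
    · have h1 : i ∈ t.toFinset ∪ K := Finset.mem_union_right _ hiK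
      rw [bV, aOp_single, if_pos h1]
      have h2 : ¬ Disjoint (insert i t.toFinset) K := by
        rw [Finset.disjoint_left]
        push_neg
        exact ⟨i, Finset.mem_insert_self _ _, hiK⟩
      rw [smul_zero, gSign, if_neg h2]
      simp
    · have h1 : i ∉ t.toFinset ∪ K := by
        rw [Finset.mem_union]
        push_neg
        exact ⟨hiT, hiK⟩
      rw [bV, aOp_single, if_neg h1]
      have h2 : sgnR i (t.toFinset ∪ K) = sgnR i K := by
        rw [sgnR, sgnR]
        congr 2
        apply Finset.ext
        intro x
        simp only [Finset.mem_filter, Finset.mem_union]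
        constructor
        · rintro ⟨hx | hx, hlt⟩
          · exact absurd (hxt x (List.mem_toFinset.mp hx)) (not_lt.2 hlt.le)
          · exact ⟨hx, hlt⟩
        · rintro ⟨hx, hlt⟩
          exact ⟨Or.inr hx, hlt⟩
      rw [h2, smul_smul, gSign_insert_left i t.toFinset K hiT hiK,
        Finset.insert_union, bV, mul_comm]

lemma foldr_union_subset {K : Finset (Fin q)} :
    ∀ {L : List (Finset (Fin q))}, K ∈ L → K ⊆ L.foldr (· ∪ ·) ∅
  | J :: L, h => by
    rcases List.mem_cons.mp h with rfl | h
    · exact Finset.subset_union_left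
    · exact (foldr_union_subset h).trans Finset.subset_union_right

lemma gSignAux_eq_zero :
    ∀ {L : List (Finset (Fin q))}, ¬ L.Pairwise Disjoint → gSignAux L = 0
  | [], h => absurd List.Pairwise.nil h
  | J :: L, h => by
    rw [List.pairwise_cons] at h
    rw [gSignAux]
    by_cases hL : L.Pairwise Disjoint
    · have h2 : ¬ ∀ K ∈ L, Disjoint J K := fun hall => h ⟨hall, hL⟩
      push_neg at h2
      obtain ⟨K, hK, hKd⟩ := h2
      have : ¬ Disjoint J (L.foldr (· ∪ ·) ∅) := fun hc =>
        hKd (hc.mono_right (foldr_union_subset hK))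
      rw [gSign, if_neg this, zero_mul]
    · rw [gSignAux_eq_zero hL, mul_zero]

/-- MAIN B: the product of Grassmann monomials acting on the vacuum. -/
lemma Phi_prod_vacuum :
    ∀ (L : List (Finset (Fin q))),
      Phi q ((L.map etaI).prod) (bV ∅) =
        ((gSignAux L : ℤ) : ℝ) • bV (L.foldr (· ∪ ·) ∅)
  | [] => by
    simp [gSignAux, bV]
  | J :: L => by
    rw [List.map_cons, List.prod_cons, map_mul, Module.End.mul_apply,
      Phi_prod_vacuum L, map_smul, Phi_etaI, aProd_single _ (Finset.sortedLT_sort J).pairwise,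
      Finset.sort_toFinset]
    rw [List.foldr_cons, gSignAux, smul_smul]
    push_cast
    rw [mul_comm]

lemma Phi_etaI_vacuum (I : Finset (Fin q)) : Phi q (etaI I) (bV ∅) = bV I := by
  have := Phi_prod_vacuum (q := q) [I]
  simp only [List.map_cons, List.map_nil, List.prod_cons, List.prod_nil, mul_one,
    List.foldr_cons, List.foldr_nil] at this
  rw [this]
  norm_num [gSignAux, gSign_empty_right, bV]

noncomputable def evMap (q : ℕ) : ExteriorAlgebra ℝ (Fin q → ℝ) →ₗ[ℝ] V q where
  toFun x := Phi q x (bV ∅)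
  map_add' x y := by simp
  map_smul' c x := by simp

lemma evMap_etaI (I : Finset (Fin q)) : evMap q (etaI I) = bV I := Phi_etaI_vacuum I

/-- The etaI span everything. -/
lemma span_etaI_top : Submodule.span ℝ (Set.range (etaI (q := q))) = ⊤ := by
  set S := Submodule.span ℝ (Set.range (etaI (q := q))) with hS
  have claim1 : ∀ (i : Fin q) (x : ExteriorAlgebra ℝ (Fin q → ℝ)), x ∈ S → ιe i * x ∈ S := by
    intro i x hx
    induction hx using Submodule.span_induction with
    | mem x h =>
      obtain ⟨I, rfl⟩ := h
      by_cases hi : i ∈ I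
      · rw [etaI_kill i I hi]; exact S.zero_mem
      · rw [etaI_insert i I hi]
        exact S.smul_mem _ (Submodule.subset_span ⟨insert i I, rfl⟩)
    | zero => rw [mul_zero]; exact S.zero_mem
    | add x y _ _ hx hy => rw [mul_add]; exact S.add_mem hx hy
    | smul a x _ hx => rw [mul_smul_comm]; exact S.smul_mem a hx
  have claim2 : ∀ (m : Fin q → ℝ) (x : ExteriorAlgebra ℝ (Fin q → ℝ)), x ∈ S →
      ExteriorAlgebra.ι ℝ m * x ∈ S := by
    intro m x hx
    have : ExteriorAlgebra.ι ℝ m = ∑ i, m i • ιe i := by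
      conv_lhs => rw [vec_expand m]
      rw [map_sum]
      exact Finset.sum_congr rfl fun i _ => by rw [map_smul]; rfl
    rw [this, Finset.sum_mul]
    exact S.sum_mem fun i _ => by
      rw [smul_mul_assoc]; exact S.smul_mem _ (claim1 i x hx)
  have claim3 : ∀ (y x : ExteriorAlgebra ℝ (Fin q → ℝ)), x ∈ S → y * x ∈ S := by
    intro y
    induction y using ExteriorAlgebra.induction with
    | algebraMap r => intro x hx; rw [← Algebra.smul_def]; exact S.smul_mem r hx
    | ι m => exact claim2 m
    | mul a b ha hb => intro x hx; rw [mul_assoc]; exact ha _ (hb _ hx)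
    | add a b ha hb => intro x hx; rw [add_mul]; exact S.add_mem (ha _ hx) (hb _ hx)
  have h1 : (1 : ExteriorAlgebra ℝ (Fin q → ℝ)) ∈ S := by
    have : etaI (∅ : Finset (Fin q)) = 1 := by
      rw [etaI_def, Finset.sort_empty]; rfl
    rw [← this]
    exact Submodule.subset_span ⟨∅, rfl⟩
  rw [eq_top_iff]
  intro x _
  have := claim3 x 1 h1
  rwa [mul_one] at this

lemma bV_linearIndependent : LinearIndependent ℝ (bV (q := q)) := by
  have : bV (q := q) = fun I => Finsupp.single I 1 := rfl
  rw [this, ← Finsupp.coe_basisSingleOne]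
  exact Finsupp.basisSingleOne.linearIndependent

lemma inj_aux {M N : Type*} [AddCommGroup M] [Module ℝ M] [AddCommGroup N] [Module ℝ N]
    {ι : Type*} (L : M →ₗ[ℝ] N) (u : ι → M)
    (hspan : ⊤ ≤ Submodule.span ℝ (Set.range u))
    (hind : LinearIndependent ℝ (fun i => L (u i))) : Function.Injective L := by
  rw [← LinearMap.ker_eq_bot]
  rw [Submodule.eq_bot_iff]
  intro v hv
  have hv' : v ∈ Submodule.span ℝ (Set.range u) := hspan trivial
  obtain ⟨c, hc⟩ := Finsupp.mem_span_range_iff_exists_finsupp.mp hv'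
  have hL : Finsupp.linearCombination ℝ (fun i => L (u i)) c = 0 := by
    rw [Finsupp.linearCombination_apply]
    rw [LinearMap.mem_ker] at hv
    rw [← hv, ← hc, map_finsuppSum]
    exact Finsupp.sum_congr fun i _ => by rw [map_smul]
  have hc0 : c = 0 := linearIndependent_iff.mp hind c hL
  rw [← hc, hc0]
  simp

lemma evMap_injective : Function.Injective (evMap q) := by
  apply inj_aux (evMap q) (etaI (q := q)) (le_of_eq span_etaI_top.symm)
  have : (fun I => evMap q (etaI I)) = bV (q := q) := funext evMap_etaI
  rw [this]
  exact bV_linearIndependent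

lemma listprod_mem_even :
    ∀ (l : List (Fin q → ℝ)), Even l.length →
      (l.map (ExteriorAlgebra.ι ℝ)).prod ∈
        CliffordAlgebra.even (0 : QuadraticForm ℝ (Fin q → ℝ))
  | [], _ => one_mem _
  | [x], h => by simp at h
  | x :: y :: t, h => by
    have ht : Even t.length := by
      rcases h with ⟨k, hk⟩
      simp only [List.length_cons] at hk
      exact ⟨k - 1, by omega⟩
    rw [List.map_cons, List.map_cons, List.prod_cons, List.prod_cons, ← mul_assoc]
    exact mul_mem (CliffordAlgebra.ι_mul_ι_mem_evenOdd_zero 0 x y) (listprod_mem_even t ht)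

lemma etaI_mem_even (I : Finset (Fin q)) (h : Even I.card) :
    etaI I ∈ CliffordAlgebra.even (0 : QuadraticForm ℝ (Fin q → ℝ)) := by
  have : etaI I = (((I.sort (· ≤ ·)).map (fun i => (Pi.single i 1 : Fin q → ℝ))).map
      (ExteriorAlgebra.ι ℝ)).prod := by
    rw [etaI_def, List.map_map]; rfl
  rw [this]
  exact listprod_mem_even _ (by
    simp only [List.length_map, Finset.length_sort]; exact h)

lemma disjoint_foldr (J : Finset (Fin q)) :
    ∀ (L : List (Finset (Fin q))), (∀ K ∈ L, Disjoint J K) →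
      Disjoint J (L.foldr (· ∪ ·) ∅)
  | [], _ => Finset.disjoint_empty_right J
  | K :: L, h => by
    rw [List.foldr_cons, Finset.disjoint_union_right]
    exact ⟨h K (List.mem_cons_self), disjoint_foldr J L fun K' hK' =>
      h K' (List.mem_cons_of_mem K hK')⟩

lemma even_card_foldr :
    ∀ (L : List (Finset (Fin q))), (∀ J ∈ L, Even J.card) → L.Pairwise Disjoint →
      Even (L.foldr (· ∪ ·) ∅).card
  | [], _, _ => by simp
  | J :: L, h, hp => by
    rw [List.pairwise_cons] at hp
    rw [List.foldr_cons, Finset.card_union_of_disjoint (disjoint_foldr J L hp.1)]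
    exact (h J (List.mem_cons_self)).add
      (even_card_foldr L (fun K hK => h K (List.mem_cons_of_mem J hK)) hp.2)

/-- The main identity: a product of Grassmann monomials expands into the eps-sum. -/
lemma eta_prod_identity (L : List (Finset (Fin q)))
    (hmem : ∀ J ∈ L, Even J.card ∧ J.Nonempty) (hne : L ≠ []) :
    (L.map etaI).prod =
      ∑ I : {I : Finset (Fin q) // Even I.card ∧ I.Nonempty},
        ((epsList L I.1 : ℤ) : ℝ) • etaI I.1 := by
  apply evMap_injective
  rw [map_sum]
  have hrhs : ∀ I : {I : Finset (Fin q) // Even I.card ∧ I.Nonempty},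
      evMap q (((epsList L I.1 : ℤ) : ℝ) • etaI I.1) =
        ((epsList L I.1 : ℤ) : ℝ) • bV I.1 := by
    intro I
    rw [map_smul, evMap_etaI]
  simp only [hrhs]
  have hlhs : evMap q ((L.map etaI).prod) =
      ((gSignAux L : ℤ) : ℝ) • bV (L.foldr (· ∪ ·) ∅) := Phi_prod_vacuum L
  rw [hlhs]
  by_cases hp : L.Pairwise Disjoint
  · have hU : Even (L.foldr (· ∪ ·) ∅).card :=
      even_card_foldr L (fun J hJ => (hmem J hJ).1) hp
    have hNe : (L.foldr (· ∪ ·) ∅).Nonempty := by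
      rcases L with _ | ⟨J, L'⟩
      · exact absurd rfl hne
      · exact ((hmem J (List.mem_cons_self)).2).mono
          (foldr_union_subset (List.mem_cons_self))
    rw [Finset.sum_eq_single (⟨L.foldr (· ∪ ·) ∅, hU, hNe⟩ :
        {I : Finset (Fin q) // Even I.card ∧ I.Nonempty})]
    · rw [epsList, if_pos ⟨rfl, hp⟩]
    · intro I _ hI
      have : L.foldr (· ∪ ·) ∅ ≠ I.1 := by
        intro hc
        exact hI (Subtype.ext hc.symm)
      rw [epsList, if_neg (fun hc => this hc.1), Int.cast_zero, zero_smul]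
    · intro hc
      exact absurd (Finset.mem_univ _) hc
  · rw [gSignAux_eq_zero hp]
    have : ∀ I : {I : Finset (Fin q) // Even I.card ∧ I.Nonempty},
        ((epsList L I.1 : ℤ) : ℝ) • bV I.1 = 0 := by
      intro I
      rw [epsList, if_neg (fun hc => hp hc.2), Int.cast_zero, zero_smul]
    simp only [this]
    simp

lemma etaI_empty : etaI (∅ : Finset (Fin q)) = 1 := by
  rw [etaI_def, Finset.sort_empty]; rfl

lemma etaI_linearIndependent : LinearIndependent ℝ (etaI (q := q)) := by
  apply LinearIndependent.of_comp (evMap q)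
  have : (⇑(evMap q) ∘ etaI (q := q)) = bV (q := q) := funext evMap_etaI
  rw [this]
  exact bV_linearIndependent

lemma etaI_pair (i j : Fin q) (hij : i < j) : etaI ({i, j} : Finset (Fin q)) = ιe i * ιe j := by
  have hid : ({i, j} : Finset (Fin q)) = insert i {j} := rfl
  have hs : ({i, j} : Finset (Fin q)).sort (· ≤ ·) = [i, j] := by
    rw [hid, sort_insert i {j} (by simp [Finset.mem_singleton, hij.ne]),
      Finset.sort_singleton]
    rw [List.orderedInsert, if_pos hij.le]
  rw [etaI_def, hs]
  simp [List.map_cons, List.prod_cons]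

lemma iota_expand (m : Fin q → ℝ) : ExteriorAlgebra.ι ℝ m = ∑ i, m i • ιe i := by
  conv_lhs => rw [vec_expand m]
  rw [map_sum]
  exact Finset.sum_congr rfl fun i _ => by rw [map_smul]; rfl

lemma ι_swap (u v : Fin q → ℝ) (c : ExteriorAlgebra ℝ (Fin q → ℝ)) :
    ExteriorAlgebra.ι ℝ u * (ExteriorAlgebra.ι ℝ v * c) =
      -(ExteriorAlgebra.ι ℝ v * (ExteriorAlgebra.ι ℝ u * c)) := by
  rw [← mul_assoc, ext_anticomm, neg_mul, mul_assoc]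

lemma ιι_mul_comm (x y z w : Fin q → ℝ) :
    (ExteriorAlgebra.ι ℝ x * ExteriorAlgebra.ι ℝ y) *
      (ExteriorAlgebra.ι ℝ z * ExteriorAlgebra.ι ℝ w) =
    (ExteriorAlgebra.ι ℝ z * ExteriorAlgebra.ι ℝ w) *
      (ExteriorAlgebra.ι ℝ x * ExteriorAlgebra.ι ℝ y) := by
  rw [mul_assoc, mul_assoc]
  rw [ι_swap y z (ExteriorAlgebra.ι ℝ w), mul_neg, ι_swap x z _, neg_neg]
  congr 1
  rw [show ExteriorAlgebra.ι ℝ y * ExteriorAlgebra.ι ℝ w =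
    -(ExteriorAlgebra.ι ℝ w * ExteriorAlgebra.ι ℝ y) from ext_anticomm y w]
  rw [mul_neg, ι_swap x w _, neg_neg]

lemma even_comm : ∀ x ∈ CliffordAlgebra.even (0 : QuadraticForm ℝ (Fin q → ℝ)),
    ∀ y ∈ CliffordAlgebra.even (0 : QuadraticForm ℝ (Fin q → ℝ)), x * y = y * x := by
  have key : ∀ z ∈ CliffordAlgebra.even (0 : QuadraticForm ℝ (Fin q → ℝ)),
      ∀ a b : Fin q → ℝ, (ExteriorAlgebra.ι ℝ a * ExteriorAlgebra.ι ℝ b) * z =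
        z * (ExteriorAlgebra.ι ℝ a * ExteriorAlgebra.ι ℝ b) := by
    intro z hz
    refine CliffordAlgebra.even_induction (Q := (0 : QuadraticForm ℝ (Fin q → ℝ)))
      (motive := fun z _ => ∀ a b : Fin q → ℝ,
        (ExteriorAlgebra.ι ℝ a * ExteriorAlgebra.ι ℝ b) * z =
          z * (ExteriorAlgebra.ι ℝ a * ExteriorAlgebra.ι ℝ b)) ?_ ?_ ?_ z hz
    · intro r a b
      exact (Algebra.commutes r _).symm
    · intro x y _ _ ihx ihy a b
      rw [mul_add, add_mul, ihx, ihy]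
    · intro m₁ m₂ x _ ih a b
      calc (ExteriorAlgebra.ι ℝ a * ExteriorAlgebra.ι ℝ b) *
            (ExteriorAlgebra.ι ℝ m₁ * ExteriorAlgebra.ι ℝ m₂ * x)
          = ((ExteriorAlgebra.ι ℝ a * ExteriorAlgebra.ι ℝ b) *
            (ExteriorAlgebra.ι ℝ m₁ * ExteriorAlgebra.ι ℝ m₂)) * x := (mul_assoc _ _ _).symm
        _ = ((ExteriorAlgebra.ι ℝ m₁ * ExteriorAlgebra.ι ℝ m₂) *
            (ExteriorAlgebra.ι ℝ a * ExteriorAlgebra.ι ℝ b)) * x := by rw [ιι_mul_comm]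
        _ = (ExteriorAlgebra.ι ℝ m₁ * ExteriorAlgebra.ι ℝ m₂) *
            ((ExteriorAlgebra.ι ℝ a * ExteriorAlgebra.ι ℝ b) * x) := mul_assoc _ _ _
        _ = (ExteriorAlgebra.ι ℝ m₁ * ExteriorAlgebra.ι ℝ m₂) *
            (x * (ExteriorAlgebra.ι ℝ a * ExteriorAlgebra.ι ℝ b)) := by rw [ih a b]
        _ = (ExteriorAlgebra.ι ℝ m₁ * ExteriorAlgebra.ι ℝ m₂ * x) *
            (ExteriorAlgebra.ι ℝ a * ExteriorAlgebra.ι ℝ b) := (mul_assoc _ _ _).symm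
  intro x hx
  refine CliffordAlgebra.even_induction (Q := (0 : QuadraticForm ℝ (Fin q → ℝ)))
    (motive := fun x _ => ∀ y ∈ CliffordAlgebra.even (0 : QuadraticForm ℝ (Fin q → ℝ)),
      x * y = y * x) ?_ ?_ ?_ x hx
  · intro r y _
    exact Algebra.commutes r y
  · intro a b _ _ iha ihb y hy
    rw [add_mul, mul_add, iha y hy, ihb y hy]
  · intro m₁ m₂ x _ ih y hy
    calc (ExteriorAlgebra.ι ℝ m₁ * ExteriorAlgebra.ι ℝ m₂ * x) * y
        = (ExteriorAlgebra.ι ℝ m₁ * ExteriorAlgebra.ι ℝ m₂) * (x * y) := mul_assoc _ _ _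
      _ = (ExteriorAlgebra.ι ℝ m₁ * ExteriorAlgebra.ι ℝ m₂) * (y * x) := by rw [ih y hy]
      _ = ((ExteriorAlgebra.ι ℝ m₁ * ExteriorAlgebra.ι ℝ m₂) * y) * x := (mul_assoc _ _ _).symm
      _ = (y * (ExteriorAlgebra.ι ℝ m₁ * ExteriorAlgebra.ι ℝ m₂)) * x := by
          rw [key y hy m₁ m₂]
      _ = y * (ExteriorAlgebra.ι ℝ m₁ * ExteriorAlgebra.ι ℝ m₂ * x) := mul_assoc _ _ _

end GrassAux

open GrassAux

/-- the quotient of the polynomial ring on the variables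
`s^I` (`I` an increasing multi-index of even positive length) by the ideal
generated by `s^{I₁}⋯s^{I_n} − Σ_I ε^{I₁⋯I_n}_I s^I` (`n ≥ 2`) is isomorphic
as an ℝ-algebra to the even Grassmann algebra, via `s^I ↦ η^I`. -/
theorem polynomial_quotient_iso_even_grassmann (q : ℕ) :
    ∃ e : (MvPolynomial {I : Finset (Fin q) // Even I.card ∧ I.Nonempty} ℝ ⧸
        Ideal.span {P : MvPolynomial {I : Finset (Fin q) // Even I.card ∧ I.Nonempty} ℝ |
          ∃ (n : ℕ) (T : Fin n → {I : Finset (Fin q) // Even I.card ∧ I.Nonempty}),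
            2 ≤ n ∧ P = (∏ i, MvPolynomial.X (T i)) -
              ∑ I : {I : Finset (Fin q) // Even I.card ∧ I.Nonempty},
                MvPolynomial.C
                  ((epsList (List.ofFn fun i => (T i).1) I.1 : ℤ) : ℝ) *
                MvPolynomial.X I}) ≃ₐ[ℝ]
      CliffordAlgebra.even (0 : QuadraticForm ℝ (Fin q → ℝ)),
      ∀ I : {I : Finset (Fin q) // Even I.card ∧ I.Nonempty},
        ((e (Ideal.Quotient.mk _ (MvPolynomial.X I)) :
          ExteriorAlgebra ℝ (Fin q → ℝ))) = etaI I.1 := by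
  classical
  set σT := {I : Finset (Fin q) // Even I.card ∧ I.Nonempty} with hσT
  set genSet : Set (MvPolynomial σT ℝ) := {P : MvPolynomial σT ℝ |
          ∃ (n : ℕ) (T : Fin n → σT),
            2 ≤ n ∧ P = (∏ i, MvPolynomial.X (T i)) -
              ∑ I : σT, MvPolynomial.C
                  ((epsList (List.ofFn fun i => (T i).1) I.1 : ℤ) : ℝ) *
                MvPolynomial.X I} with hgenSet
  set Idl := Ideal.span genSet with hIdl
  set Ev := CliffordAlgebra.even (0 : QuadraticForm ℝ (Fin q → ℝ)) with hEv
  letI : CommRing ↥Ev :=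
    { (inferInstance : Ring ↥Ev) with
      mul_comm := fun a b => Subtype.ext (even_comm a.1 a.2 b.1 b.2) }
  let Fhat : MvPolynomial σT ℝ →ₐ[ℝ] Ev :=
    MvPolynomial.aeval (fun I : σT => (⟨etaI I.1, etaI_mem_even I.1 I.2.1⟩ : Ev))
  let G : MvPolynomial σT ℝ →ₐ[ℝ] ExteriorAlgebra ℝ (Fin q → ℝ) := Ev.val.comp Fhat
  have hGX : ∀ I : σT, G (MvPolynomial.X I) = etaI I.1 := by
    intro I
    show Ev.val (Fhat (MvPolynomial.X I)) = etaI I.1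
    rw [show Fhat (MvPolynomial.X I) = ⟨etaI I.1, etaI_mem_even I.1 I.2.1⟩ from
      MvPolynomial.aeval_X _ I]
    rfl
  have hGC : ∀ r : ℝ, G (MvPolynomial.C r) = algebraMap ℝ _ r := by
    intro r
    rw [show (MvPolynomial.C r : MvPolynomial σT ℝ) = algebraMap ℝ _ r from rfl,
      AlgHom.commutes]
  have hGgen : ∀ P ∈ genSet, G P = 0 := by
    rintro P ⟨n, T, hn, rfl⟩
    set L : List (Finset (Fin q)) := List.ofFn (fun i => (T i).1) with hL
    have hmem : ∀ J ∈ L, Even J.card ∧ J.Nonempty := by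
      intro J hJ
      rw [hL, List.mem_ofFn] at hJ
      obtain ⟨i, rfl⟩ := hJ
      exact (T i).2
    have hne : L ≠ [] := by
      intro hc
      have := congrArg List.length hc
      rw [hL, List.length_ofFn] at this
      simp at this
      omega
    rw [map_sub, map_sum]
    have hprod : (∏ i, MvPolynomial.X (T i) : MvPolynomial σT ℝ) =
        (List.ofFn fun i => MvPolynomial.X (T i)).prod := List.prod_ofFn.symm
    rw [hprod, map_list_prod]
    have hmap : (List.ofFn fun i => MvPolynomial.X (T i)).map ⇑G = L.map etaI := by
      rw [List.map_ofFn, hL, List.map_ofFn]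
      congr 1
      funext i
      exact hGX (T i)
    rw [hmap]
    have hterm : ∀ I : σT,
        G (MvPolynomial.C ((epsList L I.1 : ℤ) : ℝ) * MvPolynomial.X I) =
          ((epsList L I.1 : ℤ) : ℝ) • etaI I.1 := by
      intro I
      rw [map_mul, hGC, hGX, Algebra.smul_def]
    simp only [hterm]
    rw [eta_prod_identity L hmem hne, sub_self]
  have hker : ∀ a ∈ Idl, Fhat a = 0 := by
    intro a ha
    have hGa : G a = 0 := by
      have hle : Idl ≤ RingHom.ker (G : MvPolynomial σT ℝ →+* ExteriorAlgebra ℝ (Fin q → ℝ)) := by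
        rw [hIdl, Ideal.span_le]
        intro P hP
        exact RingHom.mem_ker.mpr (hGgen P hP)
      exact RingHom.mem_ker.mp (hle ha)
    exact Subtype.ext hGa
  let f : (MvPolynomial σT ℝ ⧸ Idl) →ₐ[ℝ] Ev := Ideal.Quotient.liftₐ Idl Fhat hker
  have hfmk : ∀ p : MvPolynomial σT ℝ, f (Ideal.Quotient.mk Idl p) = Fhat p := by
    intro p
    show Ideal.Quotient.liftₐ Idl Fhat hker (Ideal.Quotient.mk Idl p) = Fhat p
    rfl
  have hfmkX : ∀ I : σT, ((f (Ideal.Quotient.mk Idl (MvPolynomial.X I)) : Ev) :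
      ExteriorAlgebra ℝ (Fin q → ℝ)) = etaI I.1 := by
    intro I
    rw [hfmk]
    exact hGX I
  -- surjectivity
  have hpair : ∀ m₁ m₂ : Fin q → ℝ, ∃ w, ((f w : Ev) : ExteriorAlgebra ℝ (Fin q → ℝ)) =
      ExteriorAlgebra.ι ℝ m₁ * ExteriorAlgebra.ι ℝ m₂ := by
    intro m₁ m₂
    set M0 : Submodule ℝ (ExteriorAlgebra ℝ (Fin q → ℝ)) :=
      Submodule.map Ev.val.toLinearMap (LinearMap.range f.toLinearMap) with hM0
    have key : ∀ i j : Fin q, ιe i * ιe j ∈ M0 := by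
      have hmm : ∀ i j : Fin q, i < j → ιe i * ιe j ∈ M0 := by
        intro i j hij
        set w0 := Ideal.Quotient.mk Idl
          (MvPolynomial.X (⟨{i, j}, by rw [Finset.card_pair hij.ne]; exact ⟨1, rfl⟩,
            Finset.insert_nonempty _ _⟩ : σT)) with hw0
        refine ⟨f w0, ⟨w0, rfl⟩, ?_⟩
        show ((f w0 : Ev) : ExteriorAlgebra ℝ (Fin q → ℝ)) = ιe i * ιe j
        rw [hw0, hfmkX]
        exact etaI_pair i j hij
      intro i j
      rcases lt_trichotomy i j with h | h | h
      · exact hmm i j h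
      · subst h
        rw [show ιe i * ιe i = 0 from ExteriorAlgebra.ι_sq_zero _]
        exact M0.zero_mem
      · rw [show ιe i * ιe j = -(ιe j * ιe i) from ext_anticomm _ _]
        exact M0.neg_mem (hmm j i h)
    have hmem : ExteriorAlgebra.ι ℝ m₁ * ExteriorAlgebra.ι ℝ m₂ ∈ M0 := by
      rw [iota_expand m₁, iota_expand m₂, Finset.sum_mul_sum]
      refine M0.sum_mem fun i _ => M0.sum_mem fun j _ => ?_
      rw [smul_mul_smul_comm]
      exact M0.smul_mem _ (key i j)
    obtain ⟨y, ⟨w, hw⟩, hy⟩ := hmem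
    exact ⟨w, by rw [show (f w : Ev) = y from hw]; exact hy⟩
  have hsurj : Function.Surjective f := by
    intro y
    obtain ⟨x, hx⟩ := y
    refine CliffordAlgebra.even_induction (Q := (0 : QuadraticForm ℝ (Fin q → ℝ)))
      (motive := fun x hx => ∃ w, f w = ⟨x, hx⟩) ?_ ?_ ?_ x hx
    · intro r
      refine ⟨algebraMap ℝ _ r, ?_⟩
      rw [AlgHom.commutes]
      rfl
    · rintro x y hxm hym ⟨wx, hwx⟩ ⟨wy, hwy⟩
      exact ⟨wx + wy, by rw [map_add, hwx, hwy]; rfl⟩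
    · rintro m₁ m₂ x hxm ⟨w, hw⟩
      obtain ⟨w2, hw2⟩ := hpair m₁ m₂
      refine ⟨w2 * w, Subtype.ext ?_⟩
      rw [map_mul]
      show ((f w2 : Ev) : ExteriorAlgebra ℝ (Fin q → ℝ)) * ((f w : Ev) : _) = _
      rw [hw2, hw]
  -- injectivity
  let Lf : (MvPolynomial σT ℝ ⧸ Idl) →ₗ[ℝ] ExteriorAlgebra ℝ (Fin q → ℝ) :=
    Ev.val.toLinearMap ∘ₗ f.toLinearMap
  let u : {I : Finset (Fin q) // Even I.card} → (MvPolynomial σT ℝ ⧸ Idl) :=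
    fun I => if h : I.1.Nonempty then Ideal.Quotient.mk Idl (MvPolynomial.X ⟨I.1, I.2, h⟩) else 1
  have hcomp : ∀ I, Lf (u I) = etaI I.1 := by
    intro I
    by_cases h : I.1.Nonempty
    · show ((f (u I) : Ev) : ExteriorAlgebra ℝ (Fin q → ℝ)) = etaI I.1
      rw [show u I = Ideal.Quotient.mk Idl (MvPolynomial.X ⟨I.1, I.2, h⟩) from dif_pos h]
      exact hfmkX _
    · rw [show u I = 1 from dif_neg h]
      rw [Finset.not_nonempty_iff_eq_empty] at h
      rw [h, etaI_empty]
      show ((f 1 : Ev) : ExteriorAlgebra ℝ (Fin q → ℝ)) = 1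
      rw [map_one]
      rfl
  have hX : ∀ I : σT, Ideal.Quotient.mk Idl (MvPolynomial.X I) ∈
      Submodule.span ℝ (Set.range u) := by
    intro I
    have : Ideal.Quotient.mk Idl (MvPolynomial.X I) = u ⟨I.1, I.2.1⟩ := by
      rw [show u ⟨I.1, I.2.1⟩ =
        Ideal.Quotient.mk Idl (MvPolynomial.X ⟨I.1, I.2.1, I.2.2⟩) from dif_pos I.2.2]
    rw [this]
    exact Submodule.subset_span ⟨_, rfl⟩
  have h1 : (1 : MvPolynomial σT ℝ ⧸ Idl) ∈ Submodule.span ℝ (Set.range u) := by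
    have : (1 : MvPolynomial σT ℝ ⧸ Idl) = u ⟨∅, by simp⟩ := by
      rw [show u ⟨∅, by simp⟩ = 1 from dif_neg (by simp)]
    rw [this]
    exact Submodule.subset_span ⟨_, rfl⟩
  have hmul : ∀ a ∈ Submodule.span ℝ (Set.range u), ∀ b ∈ Submodule.span ℝ (Set.range u),
      a * b ∈ Submodule.span ℝ (Set.range u) := by
    set sp := Submodule.span ℝ (Set.range u) with hsp
    have hgeneta : ∀ (I J : σT),
        Ideal.Quotient.mk Idl (MvPolynomial.X I) * Ideal.Quotient.mk Idl (MvPolynomial.X J)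
          ∈ sp := by
      intro I J
      have hgen : (∏ i, (MvPolynomial.X ((![I, J] : Fin 2 → σT) i) : MvPolynomial σT ℝ)) -
          ∑ K : σT, MvPolynomial.C
            ((epsList (List.ofFn fun i => ((![I, J] : Fin 2 → σT) i).1) K.1 : ℤ) : ℝ) *
            (MvPolynomial.X K : MvPolynomial σT ℝ) ∈ Idl :=
        Ideal.subset_span ⟨2, ![I, J], le_refl 2, rfl⟩
      have hprod2 : (∏ i, (MvPolynomial.X ((![I, J] : Fin 2 → σT) i) : MvPolynomial σT ℝ)) =
          MvPolynomial.X I * MvPolynomial.X J := by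
        rw [Fin.prod_univ_two]
        simp
      rw [hprod2] at hgen
      have heq : Ideal.Quotient.mk Idl (MvPolynomial.X I * MvPolynomial.X J) =
          Ideal.Quotient.mk Idl (∑ K : σT, MvPolynomial.C
            ((epsList (List.ofFn fun i => ((![I, J] : Fin 2 → σT) i).1) K.1 : ℤ) : ℝ) *
            (MvPolynomial.X K : MvPolynomial σT ℝ)) := by
        rw [Ideal.Quotient.mk_eq_mk_iff_sub_mem]
        exact hgen
      rw [map_mul] at heq
      rw [heq, map_sum]
      refine sp.sum_mem fun K _ => ?_
      rw [map_mul, show (MvPolynomial.C ((epsList (List.ofFn fun i =>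
        ((![I, J] : Fin 2 → σT) i).1) K.1 : ℤ) : ℝ) : MvPolynomial σT ℝ) =
        algebraMap ℝ _ _ from rfl, Ideal.Quotient.mk_algebraMap, ← Algebra.smul_def]
      exact sp.smul_mem _ (hX K)
    intro a ha
    refine Submodule.span_induction (p := fun x _ => ∀ b ∈ sp, x * b ∈ sp)
      ?_ ?_ ?_ ?_ ha
    · rintro x ⟨I, rfl⟩ b hb
      refine Submodule.span_induction (p := fun y _ => u I * y ∈ sp) ?_ ?_ ?_ ?_ hb
      · rintro y ⟨J, rfl⟩
        by_cases hI : I.1.Nonempty <;> by_cases hJ : J.1.Nonempty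
        · rw [show u I = Ideal.Quotient.mk Idl (MvPolynomial.X ⟨I.1, I.2, hI⟩) from dif_pos hI,
            show u J = Ideal.Quotient.mk Idl (MvPolynomial.X ⟨J.1, J.2, hJ⟩) from dif_pos hJ]
          exact hgeneta _ _
        · rw [show u J = 1 from dif_neg hJ, mul_one]
          exact Submodule.subset_span ⟨I, rfl⟩
        · rw [show u I = 1 from dif_neg hI, one_mul]
          exact Submodule.subset_span ⟨J, rfl⟩
        · rw [show u I = 1 from dif_neg hI, one_mul]
          exact Submodule.subset_span ⟨J, rfl⟩
      · show u I * 0 ∈ sp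
        rw [mul_zero]; exact sp.zero_mem
      · intro y z _ _ hy hz
        rw [mul_add]; exact sp.add_mem hy hz
      · intro c y _ hy
        rw [mul_smul_comm]; exact sp.smul_mem c hy
    · intro b hb; rw [zero_mul]; exact sp.zero_mem
    · intro x y _ _ hx hy b hb
      rw [add_mul]; exact sp.add_mem (hx b hb) (hy b hb)
    · intro c x _ hx b hb
      rw [smul_mul_assoc]; exact sp.smul_mem c (hx b hb)
  have hspan : ⊤ ≤ Submodule.span ℝ (Set.range u) := by
    intro v _
    have hadj : Algebra.adjoin ℝ
        (Set.range (fun I : σT => Ideal.Quotient.mk Idl (MvPolynomial.X I))) = ⊤ := by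
      have h0 : Algebra.adjoin ℝ (Set.range (MvPolynomial.X : σT → MvPolynomial σT ℝ)) = ⊤ :=
        MvPolynomial.adjoin_range_X
      have h2 : Set.range (fun I : σT => Ideal.Quotient.mk Idl (MvPolynomial.X I)) =
          ⇑(Ideal.Quotient.mkₐ ℝ Idl) '' Set.range (MvPolynomial.X : σT → MvPolynomial σT ℝ) := by
        rw [← Set.range_comp]
        rfl
      rw [h2, ← AlgHom.map_adjoin, h0, Algebra.map_top, AlgHom.range_eq_top]
      exact Ideal.Quotient.mkₐ_surjective ℝ Idl
    have hv : v ∈ Algebra.adjoin ℝ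
        (Set.range (fun I : σT => Ideal.Quotient.mk Idl (MvPolynomial.X I))) := by
      rw [hadj]; trivial
    refine Algebra.adjoin_induction (p := fun x _ => x ∈ Submodule.span ℝ (Set.range u))
      ?_ ?_ ?_ ?_ hv
    · rintro x ⟨I, rfl⟩
      exact hX I
    · intro r
      rw [Algebra.algebraMap_eq_smul_one]
      exact (Submodule.span ℝ (Set.range u)).smul_mem r h1
    · intro x y _ _ hx hy
      exact (Submodule.span ℝ (Set.range u)).add_mem hx hy
    · intro x y hxm hym hx hy
      exact hmul x hx y hy
  have hindL : LinearIndependent ℝ (fun I => Lf (u I)) := by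
    have : (fun I => Lf (u I)) = (fun I : {I : Finset (Fin q) // Even I.card} => etaI I.1) :=
      funext hcomp
    rw [this]
    exact etaI_linearIndependent.comp Subtype.val Subtype.val_injective
  have hinjL : Function.Injective Lf := inj_aux Lf u hspan hindL
  have hinj : Function.Injective f := by
    intro a b hab
    apply hinjL
    show Ev.val (f a) = Ev.val (f b)
    rw [hab]
  refine ⟨AlgEquiv.ofBijective f ⟨hinj, hsurj⟩, fun I => ?_⟩
  rw [show (AlgEquiv.ofBijective f ⟨hinj, hsurj⟩) (Ideal.Quotient.mk Idl (MvPolynomial.X I)) =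
    f (Ideal.Quotient.mk Idl (MvPolynomial.X I)) from rfl]
  exact hfmkX I
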